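/- For every i ∈ {1,…,n}, LCP[i] = LCP[LF_{dist(i)}(i)] − dist(i). -/

import Mathlib

/-- 1-based access to the `i`-th character of `T`. -/
def idx (T : List ℕ) (i : ℕ) : ℕ := T.getD (i - 1) 0

/-- The suffix `T[i..n]` (1-based). -/
def sufx (T : List ℕ) (i : ℕ) : List ℕ := T.drop (i - 1)

/-- Occurrence positions of `P` in `T`: `Occ(T,P) = {i ∈ [1, n−|P|+1] : P = T[i..i+|P|−1]}`. -/
def OccF (T P : List ℕ) : Finset ℕ :=
  (Finset.Icc 1 (T.length - P.length + 1)).filter (fun i => P <+: T.drop (i - 1))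

/-- `children(P) = {Pc : c ∈ Σ, Pc is a substring of T}`. -/
def childrenSet (σ : ℕ) (T P : List ℕ) : Set (List ℕ) :=
  {Q | ∃ c ∈ Finset.Icc 1 σ, Q = P ++ [c] ∧ (P ++ [c]) <:+: T}

/-- Starting positions of the maximal runs of equal characters in `L[1..n]`. -/
def SstartSet (n : ℕ) (L : ℕ → ℕ) : Finset ℕ :=
  (Finset.Icc 1 n).filter (fun i => i = 1 ∨ L i ≠ L (i - 1))

/-- `rank(S, i) = |{j ∈ S : j ≤ i}|`. -/
def rankOf (S : Finset ℕ) (i : ℕ) : ℕ := (S.filter (fun j => j ≤ i)).card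

/-- `(c, p, q)` is an answer of the range distinct query `RD(S, b, e)`:
`c` occurs in `S[b..e]`, and `p`, `q` are the first and last occurrences of `c` in `[b,e]`. -/
def RDmem (S : ℕ → ℕ) (b e c p q : ℕ) : Prop :=
  p ∈ Finset.Icc b e ∧ S p = c ∧ (∀ i ∈ Finset.Icc b e, S i = c → p ≤ i) ∧
  q ∈ Finset.Icc b e ∧ S q = c ∧ (∀ i ∈ Finset.Icc b e, S i = c → i ≤ q)

/-- `[b,e]` is the suffix-tree interval of `P`: the positions `i ∈ [1,n]` whose suffix
`T[SA[i]..n]` has `P` as a prefix are exactly `{b,…,e}`. -/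
def isIntervalOf (n : ℕ) (T : List ℕ) (SA : ℕ → ℕ) (P : List ℕ) (b e : ℕ) : Prop :=
  1 ≤ b ∧ e ≤ n ∧ ∀ i ∈ Finset.Icc 1 n, (P <+: sufx T (SA i) ↔ i ∈ Finset.Icc b e)

/-- Length of the longest common prefix of two lists. -/
def lcpLen : List ℕ → List ℕ → ℕ
  | a :: as, b :: bs => if a = b then lcpLen as bs + 1 else 0
  | _, _ => 0

/-- `𝓛_t`: substrings of `T` of length `t` whose suffix-tree node is explicit. -/
def LsetD (σ t : ℕ) (T : List ℕ) : Set (List ℕ) :=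
  {P | P <:+: T ∧ P.length = t ∧ 2 ≤ (childrenSet σ T P).ncard}

/-- `K_t = ⋃_{P ∈ 𝓛_t} children(P)`. -/
def KsetD (σ t : ℕ) (T : List ℕ) : Set (List ℕ) :=
  {Q | ∃ P ∈ LsetD σ t T, Q ∈ childrenSet σ T P}

/-- `K'_t`: members of `K_t` that are not the last child of their parent, i.e. whose
interval has a right endpoint different from that of the parent's interval. -/
def KpsetD (σ n t : ℕ) (T : List ℕ) (SA : ℕ → ℕ) : Set (List ℕ) :=
  {Q | ∃ P ∈ LsetD σ t T, Q ∈ childrenSet σ T P ∧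
    ∃ b e b' e' : ℕ, isIntervalOf n T SA P b e ∧ isIntervalOf n T SA Q b' e' ∧ e' ≠ e}



private lemma lex_cons_inv {a b : ℕ} {l m : List ℕ}
    (h : List.Lex (· < ·) (a :: l) (b :: m)) :
    a < b ∨ (a = b ∧ List.Lex (· < ·) l m) := by
  cases h with
  | cons h => exact Or.inr ⟨rfl, h⟩
  | rel h => exact Or.inl h

theorem stmt7
    (σ n : ℕ) (T : List ℕ)
    (hn : 2 ≤ n) (hlen : T.length = n)
    (halpha : ∀ c ∈ T, c ∈ Finset.Icc 1 σ)
    (hocc : ∀ c ∈ Finset.Icc 1 σ, c ∈ T)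
    (hdollar : ∀ i ∈ Finset.Icc 1 (n - 1), idx T i ≠ idx T n)
    (SA : ℕ → ℕ)
    (hSA_mem : ∀ i ∈ Finset.Icc 1 n, SA i ∈ Finset.Icc 1 n)
    (hSA_surj : ∀ j ∈ Finset.Icc 1 n, ∃ i ∈ Finset.Icc 1 n, SA i = j)
    (hSA_sorted : ∀ i j, i ∈ Finset.Icc 1 n → j ∈ Finset.Icc 1 n → i < j →
      List.Lex (· < ·) (sufx T (SA i)) (sufx T (SA j)))
    (LF : ℕ → ℕ)
    (hLF_mem : ∀ i ∈ Finset.Icc 1 n, LF i ∈ Finset.Icc 1 n)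
    (hLF : ∀ i ∈ Finset.Icc 1 n, SA i ≠ 1 → SA (LF i) = SA i - 1)
    (hLF1 : ∀ i ∈ Finset.Icc 1 n, SA i = 1 → SA (LF i) = n)
    (L : ℕ → ℕ)
    (hL : ∀ i ∈ Finset.Icc 1 n, L i = idx T (SA (LF i)))
    (LCP : ℕ → ℕ)
    (hLCP1 : LCP 1 = 0)
    (hLCP : ∀ i ∈ Finset.Icc 2 n, LCP i = lcpLen (sufx T (SA (i - 1))) (sufx T (SA i)))
    (dist : ℕ → ℕ)
    (hdist_mem : ∀ i ∈ Finset.Icc 1 n, LF^[dist i] i ∈ SstartSet n L)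
    (hdist_min : ∀ i ∈ Finset.Icc 1 n, ∀ x : ℕ, LF^[x] i ∈ SstartSet n L → dist i ≤ x)
 :
    ∀ i ∈ Finset.Icc 1 n, (LCP i : ℤ) = (LCP (LF^[dist i] i) : ℤ) - (dist i : ℤ) := by

  classical
  -- basic facts about Lex order
  have hmono : ∀ i j, i ∈ Finset.Icc 1 n → j ∈ Finset.Icc 1 n → i < j →
      List.Lex (· < ·) (sufx T (SA i)) (sufx T (SA j)) := hSA_sorted
  have hasym : ∀ {a b : List ℕ}, List.Lex (· < ·) a b → List.Lex (· < ·) b a → False :=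
    fun h1 h2 => asymm h1 h2
  have hrefl : ∀ i j, i ∈ Finset.Icc 1 n → j ∈ Finset.Icc 1 n →
      List.Lex (· < ·) (sufx T (SA i)) (sufx T (SA j)) → i < j := by
    intro i j hi hj h
    by_contra hc
    push_neg at hc
    rcases Nat.lt_or_ge j i with h' | h'
    · exact hasym h (hmono j i hj hi h')
    · have : i = j := le_antisymm h' hc
      subst this
      exact hasym h h
  have hSA_inj : ∀ i j, i ∈ Finset.Icc 1 n → j ∈ Finset.Icc 1 n → SA i = SA j → i = j := by
    intro i j hi hj h
    by_contra hc
    rcases Nat.lt_or_ge i j with h' | h'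
    · have := hmono i j hi hj h'; rw [h] at this; exact hasym this this
    · have h'' : j < i := by omega
      have := hmono j i hj hi h''; rw [h] at this; exact hasym this this
  -- suffix cons lemma
  have hcons : ∀ k, 1 ≤ k → k ≤ n → sufx T k = idx T k :: sufx T (k + 1) := by
    intro k hk1 hkn
    have hlt : k - 1 < T.length := by omega
    have e : k + 1 - 1 = (k - 1) + 1 := by omega
    simp only [sufx, idx, e]
    rw [List.drop_eq_getElem_cons hlt, List.getD_eq_getElem _ _ hlt]
  -- the key step: inside a run, LCP increases by one under LF
  have key : ∀ i, 2 ≤ i → i ≤ n → L i = L (i - 1) →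
      2 ≤ LF i ∧ LF i ≤ n ∧ LCP (LF i) = LCP i + 1 := by
    intro i h2 hn' hLeq
    have hi : i ∈ Finset.Icc 1 n := by simp only [Finset.mem_Icc]; omega
    have hi1 : i - 1 ∈ Finset.Icc 1 n := by simp only [Finset.mem_Icc]; omega
    -- a position with SA = 1 cannot share its L value with a position with SA ≠ 1
    have hdoll : ∀ j k, j ∈ Finset.Icc 1 n → k ∈ Finset.Icc 1 n → SA j = 1 → SA k ≠ 1 →
        L j ≠ L k := by
      intro j k hj hk hj1 hk1
      have hLj : L j = idx T n := by rw [hL j hj, hLF1 j hj hj1]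
      have hSAk : SA (LF k) = SA k - 1 := hLF k hk hk1
      have hmemk := hSA_mem k hk
      simp only [Finset.mem_Icc] at hmemk
      have hmem' : SA k - 1 ∈ Finset.Icc 1 (n - 1) := by
        simp only [Finset.mem_Icc]; omega
      have hne := hdollar _ hmem'
      rw [hL k hk, hSAk, hLj]
      exact fun h => hne h.symm
    have hSAi_ne : SA i ≠ 1 := by
      intro h
      have hk1 : SA (i - 1) ≠ 1 := by
        intro h'
        have := hSA_inj i (i - 1) hi hi1 (h.trans h'.symm)
        omega
      exact hdoll i (i - 1) hi hi1 h hk1 hLeq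
    have hSAi1_ne : SA (i - 1) ≠ 1 := by
      intro h
      exact hdoll (i - 1) i hi1 hi h hSAi_ne hLeq.symm
    have hmi := hSA_mem i hi
    have hmi1 := hSA_mem (i - 1) hi1
    simp only [Finset.mem_Icc] at hmi hmi1
    have hLFi : SA (LF i) = SA i - 1 := hLF i hi hSAi_ne
    have hLFi1 : SA (LF (i - 1)) = SA (i - 1) - 1 := hLF (i - 1) hi1 hSAi1_ne
    have hLFim := hLF_mem i hi
    have hLFi1m := hLF_mem (i - 1) hi1
    simp only [Finset.mem_Icc] at hLFim hLFi1m
    -- the suffixes at LF i and LF (i-1)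
    have hc1 : sufx T (SA (LF i)) = L i :: sufx T (SA i) := by
      rw [hL i hi, hLFi]
      have e : SA i - 1 + 1 = SA i := by omega
      rw [hcons (SA i - 1) (by omega) (by omega), e]
    have hc2 : sufx T (SA (LF (i - 1))) = L i :: sufx T (SA (i - 1)) := by
      rw [hLeq, hL (i - 1) hi1, hLFi1]
      have e : SA (i - 1) - 1 + 1 = SA (i - 1) := by omega
      rw [hcons (SA (i - 1) - 1) (by omega) (by omega), e]
    -- LF (i-1) < LF i
    have hlt : LF (i - 1) < LF i := by
      apply hrefl (LF (i - 1)) (LF i) (by simp only [Finset.mem_Icc]; omega)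
        (by simp only [Finset.mem_Icc]; omega)
      rw [hc1, hc2]
      exact List.Lex.cons (hmono (i - 1) i hi1 hi (by omega))
    -- LF i = LF (i-1) + 1
    have hadj : LF i = LF (i - 1) + 1 := by
      by_contra hne
      set j := LF (i - 1) + 1 with hjdef
      have hjlt : j < LF i := by omega
      have hjm : j ∈ Finset.Icc 1 n := by simp only [Finset.mem_Icc]; omega
      have hSAjm := hSA_mem j hjm
      simp only [Finset.mem_Icc] at hSAjm
      have h1 : List.Lex (· < ·) (sufx T (SA (LF (i - 1)))) (sufx T (SA j)) :=
        hmono (LF (i - 1)) j (by simp only [Finset.mem_Icc]; omega) hjm (by omega)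
      have h2 : List.Lex (· < ·) (sufx T (SA j)) (sufx T (SA (LF i))) :=
        hmono j (LF i) hjm (by simp only [Finset.mem_Icc]; omega) hjlt
      rw [hc2] at h1
      rw [hc1] at h2
      rw [hcons (SA j) (by omega) (by omega)] at h1 h2
      -- analyze the two Lex relations
      rcases lex_cons_inv h1 with h1' | ⟨he1, hA⟩
      · rcases lex_cons_inv h2 with h2' | ⟨he2, -⟩
        · omega
        · omega
      rcases lex_cons_inv h2 with h2' | ⟨-, hB⟩
      · omega
      by_cases hSAj : SA j = n
      · -- then sufx T (SA j + 1) = [] and nothing is Lex-below []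
        have : sufx T (SA j + 1) = [] := by
          simp only [sufx, hSAj]
          have : n + 1 - 1 = T.length := by omega
          rw [this, List.drop_length]
        rw [this] at hA
        exact List.not_lex_nil hA
      · obtain ⟨k, hk, hkSA⟩ := hSA_surj (SA j + 1) (by simp only [Finset.mem_Icc]; omega)
        rw [← hkSA] at hA hB
        have hk1 : i - 1 < k := hrefl (i - 1) k hi1 hk hA
        have hk2 : k < i := hrefl k i hk hi hB
        omega
    -- conclude about LCP
    refine ⟨by omega, by omega, ?_⟩
    have hLCPLF : LCP (LF i) =
        lcpLen (sufx T (SA (LF i - 1))) (sufx T (SA (LF i))) :=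
      hLCP (LF i) (by simp only [Finset.mem_Icc]; omega)
    have e : LF i - 1 = LF (i - 1) := by omega
    rw [hLCPLF, e, hc1, hc2]
    rw [hLCP i (by simp only [Finset.mem_Icc]; omega)]
    simp [lcpLen]
  -- main induction on dist
  have main : ∀ d : ℕ, ∀ i ∈ Finset.Icc 1 n, dist i = d →
      (LCP i : ℤ) = (LCP (LF^[d] i) : ℤ) - (d : ℤ) := by
    intro d
    induction d with
    | zero => intro i hi _; simp
    | succ d ih =>
      intro i hi hd
      have hi' := hi
      simp only [Finset.mem_Icc] at hi'
      have hns : i ∉ SstartSet n L := by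
        intro h
        have := hdist_min i hi 0 (by simpa using h)
        omega
      have hrun : i ≠ 1 ∧ L i = L (i - 1) := by
        simp only [SstartSet, Finset.mem_filter, Finset.mem_Icc, not_and, not_or,
          not_not] at hns
        exact hns ⟨hi'.1, hi'.2⟩
      obtain ⟨hkey1, hkey2, hkey3⟩ := key i (by omega) hi'.2 hrun.2
      have hLFmem : LF i ∈ Finset.Icc 1 n := by simp only [Finset.mem_Icc]; omega
      have e1 : LF^[d + 1] i = LF^[d] (LF i) := Function.iterate_succ_apply LF d i
      have hd1 : dist (LF i) = d := by
        have hm1 := hdist_mem i hi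
        rw [hd, e1] at hm1
        have le1 : dist (LF i) ≤ d := hdist_min (LF i) hLFmem d hm1
        have hm2 := hdist_mem (LF i) hLFmem
        rw [← Function.iterate_succ_apply LF (dist (LF i)) i] at hm2
        have le2 := hdist_min i hi (dist (LF i) + 1) hm2
        omega
      have ihLF := ih (LF i) hLFmem hd1
      rw [hkey3] at ihLF
      rw [e1]
      push_cast at ihLF ⊢
      omega
  intro i hi
  exact main (dist i) i hi rfl
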